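/- A countable group G is left-orderable if and only if there exists an injective group homomorphism from G into the group of order-preserving bijections of the real line ℝ (equivalently, the group of orientation-preserving homeomorphisms of ℝ, with composition as the operation). -/

import Mathlib

section RextAux

/-- Extension of a map `ℚ → ℚ` to `ℝ` by suprema. -/
noncomputable def rext (f : ℚ → ℚ) (x : ℝ) : ℝ :=
  sSup ((fun q : ℚ => (f q : ℝ)) '' {q : ℚ | (q : ℝ) < x})

lemma rext_set_nonempty (f : ℚ → ℚ) (x : ℝ) :
    ((fun q : ℚ => (f q : ℝ)) '' {q : ℚ | (q : ℝ) < x}).Nonempty := by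
  obtain ⟨q, hq⟩ := exists_rat_lt x
  exact ⟨f q, ⟨q, hq, rfl⟩⟩

lemma rext_bddAbove {f : ℚ → ℚ} (hf : Monotone f) (x : ℝ) :
    BddAbove ((fun q : ℚ => (f q : ℝ)) '' {q : ℚ | (q : ℝ) < x}) := by
  obtain ⟨p, hp⟩ := exists_rat_gt x
  refine ⟨(f p : ℝ), ?_⟩
  rintro _ ⟨q, hq, rfl⟩
  have hqp : q ≤ p := by exact_mod_cast (hq.trans hp).le
  show ((f q : ℝ)) ≤ (f p : ℝ)
  exact_mod_cast hf hqp

lemma rext_le {f : ℚ → ℚ} (hf : Monotone f) {x : ℝ} {p : ℚ} (hxp : x ≤ (p : ℝ)) :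
    rext f x ≤ (f p : ℝ) := by
  refine csSup_le (rext_set_nonempty f x) ?_
  rintro _ ⟨q, hq, rfl⟩
  have hqp : q ≤ p := by exact_mod_cast (lt_of_lt_of_le hq hxp).le
  show ((f q : ℝ)) ≤ (f p : ℝ)
  exact_mod_cast hf hqp

lemma le_rext {f : ℚ → ℚ} (hf : Monotone f) {x : ℝ} {p : ℚ} (hpx : (p : ℝ) < x) :
    (f p : ℝ) ≤ rext f x :=
  le_csSup (rext_bddAbove hf x) ⟨p, hpx, rfl⟩

lemma rext_strictMono {f : ℚ → ℚ} (hf : StrictMono f) : StrictMono (rext f) := by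
  intro x y hxy
  obtain ⟨p, hxp, hpy⟩ := exists_rat_btwn hxy
  obtain ⟨p', hpp', hp'y⟩ := exists_rat_btwn hpy
  have h1 : rext f x ≤ (f p : ℝ) := rext_le hf.monotone hxp.le
  have h2 : (f p : ℝ) < (f p' : ℝ) := by exact_mod_cast hf (by exact_mod_cast hpp')
  have h3 : (f p' : ℝ) ≤ rext f y := le_rext hf.monotone hp'y
  linarith

lemma rext_rat (f : ℚ ≃o ℚ) (p : ℚ) : rext f (p : ℝ) = (f p : ℝ) := by
  refine le_antisymm (rext_le f.monotone le_rfl) ?_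
  refine le_of_forall_lt fun c hc => ?_
  obtain ⟨q, hcq, hq⟩ := exists_rat_btwn hc
  have hq' : f.symm q < p := by
    have h : q < f p := by exact_mod_cast hq
    simpa using f.symm.strictMono h
  calc c < (q : ℝ) := hcq
    _ = (f (f.symm q) : ℝ) := by rw [f.apply_symm_apply]
    _ ≤ rext f p := le_rext f.monotone (by exact_mod_cast hq')

lemma rext_comp {f g : ℚ → ℚ} (hf : StrictMono f) (hg : StrictMono g) (x : ℝ) :
    rext f (rext g x) = rext (fun q => f (g q)) x := by
  apply le_antisymm
  · refine csSup_le (rext_set_nonempty f _) ?_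
    rintro _ ⟨q, hq, rfl⟩
    obtain ⟨_, ⟨p, hpx, rfl⟩, hqp⟩ := exists_lt_of_lt_csSup (rext_set_nonempty g x) hq
    change (q : ℝ) < ((g p : ℚ) : ℝ) at hqp
    have hqp' : q ≤ g p := by exact_mod_cast hqp.le
    have h : (f q : ℝ) ≤ (f (g p) : ℝ) := by exact_mod_cast hf.monotone hqp'
    exact h.trans (le_csSup (rext_bddAbove (hf.comp hg).monotone x) ⟨p, hpx, rfl⟩)
  · refine csSup_le (rext_set_nonempty _ x) ?_
    rintro _ ⟨p, hpx, rfl⟩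
    obtain ⟨p', hpp', hp'x⟩ := exists_rat_btwn (show (p : ℝ) < x from hpx)
    have h1 : (g p : ℝ) < rext g x :=
      lt_of_lt_of_le (by exact_mod_cast hg (by exact_mod_cast hpp')) (le_rext hg.monotone hp'x)
    exact le_rext hf.monotone h1

lemma rext_id (x : ℝ) : rext (fun q => q) x = x := by
  apply le_antisymm
  · exact csSup_le (rext_set_nonempty _ x) (by rintro _ ⟨q, hq, rfl⟩; exact hq.le)
  · refine le_of_forall_lt fun c hc => ?_
    obtain ⟨q, hcq, hqx⟩ := exists_rat_btwn hc
    exact hcq.trans_le (le_rext (f := fun q => q) (fun _ _ h => h) hqx)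

end RextAux

/-- A group is left-orderable if it admits a strict linear order invariant under
left multiplication. -/
def LeftOrderable (G : Type*) [Group G] : Prop :=
  ∃ r : G → G → Prop, IsStrictTotalOrder G r ∧ ∀ f g h : G, r g h → r (f * g) (f * h)

/-- a countable group is left-orderable iff it embeds into the
group of order-preserving bijections of the real line (i.e. there is an
injective homomorphism into `Equiv.Perm ℝ` whose image consists of strictly
monotone bijections). -/
theorem countable_leftOrderable_iff_embeds_homeoPlusReal
    (G : Type*) [Group G] [Countable G] :
    LeftOrderable G ↔
      ∃ f : G →* Equiv.Perm ℝ, Function.Injective f ∧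
        ∀ g : G, StrictMono ⇑(f g) := by
  constructor
  · rintro ⟨r, hsto, hinv⟩
    haveI := hsto
    letI : DecidableRel r := Classical.decRel r
    letI : LinearOrder G := linearOrderOfSTO r
    have hlt : ∀ a b : G, a < b ↔ r a b := fun a b => Iff.rfl
    haveI : Countable (Lex (G × ℚ)) := inferInstanceAs (Countable (G × ℚ))
    haveI : DenselyOrdered (Lex (G × ℚ)) := by
      constructor
      intro a b hab
      rcases (Prod.Lex.lt_iff).1 hab with h | ⟨h1, h2⟩
      · exact ⟨toLex ((ofLex a).1, (ofLex a).2 + 1),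
          (Prod.Lex.lt_iff).2 (Or.inr ⟨rfl, lt_add_one _⟩),
          (Prod.Lex.lt_iff).2 (Or.inl h)⟩
      · obtain ⟨c, hc1, hc2⟩ := exists_between h2
        exact ⟨toLex ((ofLex a).1, c),
          (Prod.Lex.lt_iff).2 (Or.inr ⟨rfl, hc1⟩),
          (Prod.Lex.lt_iff).2 (Or.inr ⟨h1, hc2⟩)⟩
    haveI : Nonempty (Lex (G × ℚ)) := ⟨toLex (1, 0)⟩
    obtain ⟨iso⟩ := Order.iso_of_countable_dense (α := Lex (G × ℚ)) (β := ℚ)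
    let Af : G → Lex (G × ℚ) → Lex (G × ℚ) := fun g x => toLex (g * (ofLex x).1, (ofLex x).2)
    have Amono : ∀ g : G, StrictMono (Af g) := by
      intro g x y hxy
      rcases (Prod.Lex.lt_iff).1 hxy with h | ⟨h1, h2⟩
      · exact (Prod.Lex.lt_iff).2 (Or.inl ((hlt _ _).2 (hinv g _ _ ((hlt _ _).1 h))))
      · exact (Prod.Lex.lt_iff).2 (Or.inr ⟨by show g * (ofLex x).1 = g * (ofLex y).1; rw [h1], h2⟩)
    have Acomp : ∀ g h : G, ∀ x, Af g (Af h x) = Af (g * h) x := by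
      intro g h x
      simp only [Af, ofLex_toLex]
      rw [mul_assoc]
    have Aone : ∀ x, Af 1 x = x := by
      intro x
      simp only [Af, one_mul]
      rfl
    have Asurj : ∀ g : G, Function.Surjective (Af g) := fun g y =>
      ⟨Af g⁻¹ y, by rw [Acomp, mul_inv_cancel, Aone]⟩
    let ψ : G → (ℚ ≃o ℚ) := fun g =>
      (iso.symm.trans (StrictMono.orderIsoOfSurjective (Af g) (Amono g) (Asurj g))).trans iso
    have ψapply : ∀ g q, ψ g q = iso (Af g (iso.symm q)) := fun g q => rfl
    have ψcomp : ∀ g h : G, ∀ q : ℚ, ψ g (ψ h q) = ψ (g * h) q := by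
      intro g h q
      rw [ψapply, ψapply, ψapply, iso.symm_apply_apply, Acomp]
    have ψone : ∀ q : ℚ, ψ 1 q = q := by
      intro q
      rw [ψapply, Aone, iso.apply_symm_apply]
    have key_inv : ∀ g : G, ∀ x : ℝ, rext (⇑(ψ g⁻¹)) (rext (⇑(ψ g)) x) = x := by
      intro g x
      rw [rext_comp (ψ g⁻¹).strictMono (ψ g).strictMono]
      have h : (fun q => ψ g⁻¹ (ψ g q)) = fun q : ℚ => q := by
        funext q
        rw [ψcomp, inv_mul_cancel, ψone]
      rw [h, rext_id]
    refine ⟨{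
        toFun := fun g =>
          { toFun := rext (⇑(ψ g))
            invFun := rext (⇑(ψ g⁻¹))
            left_inv := key_inv g
            right_inv := by
              have h := key_inv g⁻¹
              rwa [inv_inv] at h }
        map_one' := by
          ext x
          have h : ⇑(ψ (1 : G)) = fun q : ℚ => q := funext ψone
          simp only [Equiv.coe_fn_mk, h, rext_id]
          rfl
        map_mul' := by
          intro g h
          ext x
          have hc : rext (⇑(ψ g)) (rext (⇑(ψ h)) x) = rext (⇑(ψ (g * h))) x := by
            rw [rext_comp (ψ g).strictMono (ψ h).strictMono]
            congr 1
            funext q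
            rw [ψcomp]
          simpa [Equiv.Perm.mul_apply] using hc.symm }, ?_, ?_⟩
    · intro g h hEq
      have hq : ∀ q : ℚ, ψ g q = ψ h q := by
        intro q
        have hx := DFunLike.congr_fun hEq (q : ℝ)
        simp only [MonoidHom.coe_mk, OneHom.coe_mk, Equiv.coe_fn_mk] at hx
        have := hx
        rw [rext_rat (ψ g) q, rext_rat (ψ h) q] at this
        exact_mod_cast this
      have hA : Af g (toLex (1, 0)) = Af h (toLex (1, 0)) := by
        have h1 := hq (iso (toLex (1, 0)))
        rw [ψapply, ψapply, iso.symm_apply_apply] at h1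
        exact iso.injective h1
      have h2 : g * 1 = h * 1 := congrArg (fun z => (ofLex z).1) hA
      simpa using h2
    · intro g
      exact rext_strictMono (ψ g).strictMono
  · rintro ⟨f, hinj, hmono⟩
    obtain ⟨e0, he0⟩ := exists_surjective_nat ℚ
    let e : ℕ → ℝ := fun n => ((e0 n : ℚ) : ℝ)
    have hrange : Set.range e = Set.range ((↑) : ℚ → ℝ) := by
      ext x
      constructor
      · rintro ⟨n, rfl⟩; exact ⟨_, rfl⟩
      · rintro ⟨q, rfl⟩
        obtain ⟨n, rfl⟩ := he0 q
        exact ⟨n, rfl⟩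
    have he : Dense (Set.range e) := by
      rw [hrange]; exact Rat.denseRange_cast
    have hcont : ∀ g : G, Continuous ⇑(f g) := fun g => by
      have h := (StrictMono.orderIsoOfSurjective ⇑(f g) (hmono g) (f g).surjective).continuous
      rwa [StrictMono.coe_orderIsoOfSurjective] at h
    have hmul : ∀ a b : G, ∀ x : ℝ, f (a * b) x = f a (f b x) := by
      intro a b x
      rw [map_mul]
      rfl
    let F : G → Lex (ℕ → ℝ) := fun g => toLex (fun n => f g (e n))
    have Finj : ∀ g h : G, F g = F h → g = h := by
      intro g h hgh
      apply hinj
      apply Equiv.coe_fn_injective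
      refine Continuous.ext_on he (hcont g) (hcont h) ?_
      rintro _ ⟨n, rfl⟩
      exact congrFun (congrArg ofLex hgh) n
    refine ⟨fun a b => F a < F b,
      { trichotomous := ?_, irrefl := ?_, trans := ?_ }, ?_⟩
    · intro a b hab hba
      rcases lt_trichotomy (F a) (F b) with h | h | h
      · exact absurd h hab
      · exact Finj _ _ h
      · exact absurd h hba
    · exact fun a => lt_irrefl (F a)
    · exact fun a b c => lt_trans
    · intro k g h hgh
      have hgh' : Pi.Lex (· < ·) (fun {_} => (· < ·))
          (fun n => f g (e n)) (fun n => f h (e n)) := hgh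
      obtain ⟨n, hpre, hn⟩ := hgh'
      show Pi.Lex (· < ·) (fun {_} => (· < ·))
          (fun n => f (k * g) (e n)) (fun n => f (k * h) (e n))
      refine ⟨n, fun j hj => ?_, ?_⟩
      · show f (k * g) (e j) = f (k * h) (e j)
        rw [hmul, hmul]
        exact congrArg ⇑(f k) (hpre j hj)
      · show f (k * g) (e n) < f (k * h) (e n)
        rw [hmul, hmul]
        exact hmono k hn
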